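/- arXiv:2311.04379 — 2 statements merged into one kernel-verified Lean document; each statement's English description precedes it below -/
import Mathlib

section
/- Let k ≥ 537, N ≥ 1, 0 ≤ δ < 1, M = √(kN/(1-δ)), and q = ((1-δ)/N)·(1/2 + √2·π/√k + π²/k). Suppose p ∈ [0,1] and p̃ ∈ [0,1] satisfy |p̃ - p| ≤ 2π·√(p(1-p))/M + π²/M². If p ≤ (1-δ)/(2N), then p̃ < q. -/
open Real

set_option maxHeartbeats 1000000 in
theorem stmt_1 (k N δ M q p ptil : ℝ) (hk : 537 ≤ k) (hN : 1 ≤ N)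
    (hδ0 : 0 ≤ δ) (hδ1 : δ < 1)
    (hM : M = Real.sqrt (k * N / (1 - δ)))
    (hq : q = ((1 - δ) / N) * (1 / 2 + Real.sqrt 2 * π / Real.sqrt k + π ^ 2 / k))
    (hp : p ∈ Set.Icc (0 : ℝ) 1) (hptil : ptil ∈ Set.Icc (0 : ℝ) 1)
    (herr : |ptil - p| ≤ 2 * π * Real.sqrt (p * (1 - p)) / M + π ^ 2 / M ^ 2)
    (hple : p ≤ (1 - δ) / (2 * N)) :
    ptil < q := by
  obtain ⟨hp0, hp1⟩ := hp
  have hδ : 0 < 1 - δ := by linarith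
  have hN0 : 0 < N := by linarith
  have hk0 : (0:ℝ) < k := by linarith
  set c : ℝ := (1 - δ) / N with hcdef
  have hc : 0 < c := div_pos hδ hN0
  have hkc : k * N / (1 - δ) = k / c := by
    rw [hcdef]; field_simp
  have hM2 : M ^ 2 = k / c := by
    rw [hM, sq_sqrt (by positivity), hkc]
  have hMpos : 0 < M := by
    rw [hM]; exact Real.sqrt_pos.mpr (by positivity)
  have hπ : 0 < π := pi_pos
  have hA : π ^ 2 / M ^ 2 = c * π ^ 2 / k := by
    rw [hM2]; field_simp
  have hpc : p ≤ c / 2 :=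
    calc p ≤ (1 - δ) / (2 * N) := hple
    _ = c / 2 := by rw [hcdef]; ring
  have hsk : (0:ℝ) < Real.sqrt k := Real.sqrt_pos.mpr hk0
  have hsc : (0:ℝ) < Real.sqrt c := Real.sqrt_pos.mpr hc
  have hs2 : (0:ℝ) < Real.sqrt 2 := Real.sqrt_pos.mpr (by norm_num)
  have hsk2 : Real.sqrt k ^ 2 = k := sq_sqrt hk0.le
  have hsc2 : Real.sqrt c ^ 2 = c := sq_sqrt hc.le
  have hs22 : Real.sqrt 2 ^ 2 = 2 := sq_sqrt (by norm_num)
  have hMval : M = Real.sqrt k / Real.sqrt c := by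
    rw [hM, hkc, Real.sqrt_div hk0.le]
  have hsc2' : Real.sqrt (c / 2) = Real.sqrt c / Real.sqrt 2 := Real.sqrt_div hc.le 2
  have hE : 2 * π * Real.sqrt (c / 2) / M = Real.sqrt 2 * π * c / Real.sqrt k := by
    rw [hsc2', hMval]
    field_simp
    linear_combination 2 * hsc2 - c * hs22
  have hq' : q = c / 2 + Real.sqrt 2 * π * c / Real.sqrt k + c * π ^ 2 / k := by
    rw [hq]; ring
  have herr' : ptil ≤ p + 2 * π * Real.sqrt (p * (1 - p)) / M + π ^ 2 / M ^ 2 := by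
    have := abs_le.mp herr
    linarith [this.1, this.2]
  rcases eq_or_lt_of_le hp0 with h0 | h0
  · -- p = 0
    have hz : Real.sqrt (p * (1 - p)) = 0 := by rw [← h0]; simp
    rw [hz, hA] at herr'
    have hzz : 2 * π * 0 / M = 0 := by ring
    have h1 : (0:ℝ) < Real.sqrt 2 * π * c / Real.sqrt k := by positivity
    rw [hq']
    linarith [herr', hzz, h1, hc, h0]
  · -- p > 0
    have h1p : 1 - p < 1 := by linarith
    have h1p0 : 0 ≤ 1 - p := by linarith
    have hsp : 0 < Real.sqrt p := Real.sqrt_pos.mpr h0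
    have hsplit : Real.sqrt (p * (1 - p)) = Real.sqrt p * Real.sqrt (1 - p) :=
      Real.sqrt_mul hp0 _
    have hlt1 : Real.sqrt (1 - p) < 1 := by
      have := Real.sqrt_lt_sqrt h1p0 h1p
      simpa using this
    have hB : Real.sqrt (p * (1 - p)) < Real.sqrt p := by
      rw [hsplit]
      nlinarith [hsp, hlt1, Real.sqrt_nonneg (1 - p)]
    have hpc' : Real.sqrt p ≤ Real.sqrt (c / 2) := Real.sqrt_le_sqrt hpc
    have hlt : Real.sqrt (p * (1 - p)) < Real.sqrt (c / 2) := lt_of_lt_of_le hB hpc'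
    have hBB : 2 * π * Real.sqrt (p * (1 - p)) / M < 2 * π * Real.sqrt (c / 2) / M := by
      gcongr
    rw [hE] at hBB
    rw [hA] at herr'
    rw [hq']
    linarith [herr', hBB, hpc]
end

section
/- Let k ≥ 537, N ≥ 1, 0 ≤ δ < 1, M = √(kN/(1-δ)), and q = ((1-δ)/N)·(1/2 + √2·π/√k + π²/k). Suppose p ∈ [0,1] and p̃ ≥ 0 satisfy |p̃ - p| ≤ 2π·√(p(1-p))/M + π²/M². If p ≥ (1-δ)/N, then p̃ > q. -/
open Real

set_option maxHeartbeats 1000000 in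
theorem stmt_2 (k N δ M q p ptil : ℝ) (hk : 537 ≤ k) (hN : 1 ≤ N)
    (hδ0 : 0 ≤ δ) (hδ1 : δ < 1)
    (hM : M = Real.sqrt (k * N / (1 - δ)))
    (hq : q = ((1 - δ) / N) * (1 / 2 + Real.sqrt 2 * π / Real.sqrt k + π ^ 2 / k))
    (hp : p ∈ Set.Icc (0 : ℝ) 1) (hptil : 0 ≤ ptil)
    (herr : |ptil - p| ≤ 2 * π * Real.sqrt (p * (1 - p)) / M + π ^ 2 / M ^ 2)
    (hpge : p ≥ (1 - δ) / N) :
    ptil > q := by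
  obtain ⟨hp0, hp1⟩ := hp
  have hδN : (0:ℝ) < 1 - δ := by linarith
  have hN0 : (0:ℝ) < N := by linarith
  have hc : 0 < (1 - δ) / N := div_pos hδN hN0
  have hk0 : (0:ℝ) < k := by linarith
  set u := Real.sqrt k with hu
  have hu2 : u ^ 2 = k := Real.sq_sqrt hk0.le
  have hu23 : (23.17:ℝ) < u := by
    have : Real.sqrt (23.17 ^ 2) < Real.sqrt k :=
      Real.sqrt_lt_sqrt (by positivity) (by nlinarith)
    rwa [Real.sqrt_sq (by norm_num : (0:ℝ) ≤ 23.17)] at this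
  have hu0 : (0:ℝ) < u := by linarith
  set t := Real.sqrt ((1 - δ) / N) with ht
  have ht2 : t ^ 2 = (1 - δ) / N := Real.sq_sqrt hc.le
  have ht0 : 0 < t := Real.sqrt_pos.mpr hc
  set s := Real.sqrt p with hs
  have hs2 : s ^ 2 = p := Real.sq_sqrt hp0
  have hs0 : 0 ≤ s := Real.sqrt_nonneg p
  have hst : t ≤ s := Real.sqrt_le_sqrt hpge
  have hMeq : M = u / t := by
    rw [hM, show k * N / (1 - δ) = k / ((1 - δ) / N) by field_simp,
      Real.sqrt_div hk0.le]
  have hM0 : 0 < M := by rw [hMeq]; positivity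
  have hπ0 := Real.pi_pos
  have hsqle : Real.sqrt (p * (1 - p)) ≤ s := by
    apply Real.sqrt_le_sqrt; nlinarith
  have herr2 : p - (2 * π * s / M + π ^ 2 / M ^ 2) ≤ ptil := by
    have h1 := (abs_le.mp herr).1
    have h2 : 2 * π * Real.sqrt (p * (1 - p)) / M ≤ 2 * π * s / M :=
      (div_le_div_iff_of_pos_right hM0).mpr (by nlinarith)
    linarith
  -- rewrite error bound in terms of u, t
  have hEeq : p - (2 * π * s / M + π ^ 2 / M ^ 2)
      = p - 2 * π * s * t / u - π ^ 2 * t ^ 2 / u ^ 2 := by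
    rw [hMeq]
    field_simp
    ring
  -- numeric bounds
  have hπl : π < 3.141593 := Real.pi_lt_d6
  have hπg : (3.141592:ℝ) < π := Real.pi_gt_d6
  have h2l : Real.sqrt 2 < 1.4142136 :=
    (Real.sqrt_lt' (by norm_num)).mpr (by norm_num)
  have h20 : (0:ℝ) ≤ Real.sqrt 2 := Real.sqrt_nonneg 2
  have hsp : Real.sqrt 2 * π ≤ 1.4142136 * 3.141593 :=
    mul_le_mul h2l.le hπl.le hπ0.le (by norm_num)
  have hpi2 : π ^ 2 < 3.141593 ^ 2 := by nlinarith [hπl, hπ0]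
  have hcoef : (2 + Real.sqrt 2) * π < 10.72649 := by nlinarith [hsp, hπl]
  have h5 : (2 + Real.sqrt 2) * π * u < 10.72649 * u :=
    mul_lt_mul_of_pos_right hcoef hu0
  have huineq : (2 + Real.sqrt 2) * π * u + 2 * π ^ 2 < u ^ 2 / 2 := by
    nlinarith [sq_nonneg (u - 23.17)]
  have hfin2 : t ^ 2 * ((2 + Real.sqrt 2) * π * u + 2 * π ^ 2) < t ^ 2 * (u ^ 2 / 2) :=
    mul_lt_mul_of_pos_left huineq (by positivity)
  -- key multiplied inequality
  have hkey : (t ^ 2 * (1 / 2) * u ^ 2 + Real.sqrt 2 * π * t ^ 2 * u + π ^ 2 * t ^ 2)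
      + (2 * π * s * t * u + π ^ 2 * t ^ 2) < p * u ^ 2 := by
    have hmono : 0 ≤ (s - t) * ((s + t) * u - 2 * π * t) * u := by
      apply mul_nonneg (mul_nonneg (by linarith) (by nlinarith)) hu0.le
    have hmono' : t ^ 2 * u ^ 2 - 2 * π * t ^ 2 * u ≤ s ^ 2 * u ^ 2 - 2 * π * s * t * u := by
      nlinarith [hmono]
    rw [← hs2]
    have hfin2' : (2 + Real.sqrt 2) * π * u * t ^ 2 + 2 * π ^ 2 * t ^ 2 < u ^ 2 / 2 * t ^ 2 := by
      linarith [hfin2, mul_comm (t ^ 2) ((2 + Real.sqrt 2) * π * u + 2 * π ^ 2),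
        mul_comm (t ^ 2) (u ^ 2 / 2)]
    linarith [hfin2']
  have hqeq : q = t ^ 2 * (1 / 2) + Real.sqrt 2 * π * t ^ 2 / u + π ^ 2 * t ^ 2 / u ^ 2 := by
    rw [hq, ← ht2, ← hu2]
    field_simp
  have hfinal : q < p - 2 * π * s * t / u - π ^ 2 * t ^ 2 / u ^ 2 := by
    rw [← mul_lt_mul_iff_left₀ (show (0:ℝ) < u ^ 2 by positivity), hqeq]
    have e1 : (t ^ 2 * (1 / 2) + Real.sqrt 2 * π * t ^ 2 / u + π ^ 2 * t ^ 2 / u ^ 2) * u ^ 2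
        = t ^ 2 * (1 / 2) * u ^ 2 + Real.sqrt 2 * π * t ^ 2 * u + π ^ 2 * t ^ 2 := by
      field_simp
    have e2 : (p - 2 * π * s * t / u - π ^ 2 * t ^ 2 / u ^ 2) * u ^ 2
        = p * u ^ 2 - (2 * π * s * t * u + π ^ 2 * t ^ 2) := by
      field_simp; ring
    rw [e1, e2]
    linarith
  linarith [hEeq ▸ herr2]
end
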